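/- Let J be a finite set of jobs with release times r_j, deadlines d_j, processing times p_j ≤ d_j − r_j, satisfying the agreeable-deadlines condition: for all i, j ∈ J, r_i ≤ r_j if and only if d_i ≤ d_j. Then among all feasible single-machine schedules minimizing the span, there exists one in which jobs start in order of their release times: r_i ≤ r_j implies s_i ≤ s_j. -/

import Mathlib

open MeasureTheory

open Set Function

open scoped Classical

section Stmt6Aux

variable {ι : Type*}

noncomputable def Wt (J : Finset ι) (r : ι → ℝ) (j : ι) : ℕ :=
  2 ^ (J.filter fun k => r j < r k).card

noncomputable def Nval (J : Finset ι) (r : ι → ℝ) (s : ι → ℝ) : ℕ :=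
  ∑ i ∈ J, ∑ j ∈ J, if r i < r j ∧ s j < s i then Wt J r j else 0

lemma sum_two_pow_lt' {ι : Type*} (J : Finset ι) (r : ι → ℝ) :
    ∀ (n : ℕ) (v : ℝ), (J.filter fun c => v < r c).card = n →
      (∑ c ∈ J.filter (fun c => v < r c), 2 ^ (J.filter fun k => r c < r k).card)
        < 2 ^ n := by
  classical
  intro n
  induction n using Nat.strong_induction_on with
  | _ n ih =>
    intro v hcard
    set T := J.filter fun c => v < r c with hT
    rcases T.eq_empty_or_nonempty with hE | hNE
    · rw [hE]
      simp only [Finset.sum_empty]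
      positivity
    · obtain ⟨c0, hc0T, hc0min⟩ := T.exists_min_image r hNE
      have hvc0 : v < r c0 := (Finset.mem_filter.mp hc0T).2
      have hc0J : c0 ∈ J := (Finset.mem_filter.mp hc0T).1
      set v' := r c0 with hv'
      -- split T
      have hsplit : ∑ c ∈ T, 2 ^ (J.filter fun k => r c < r k).card
          = (∑ c ∈ T.filter (fun c => v' < r c), 2 ^ (J.filter fun k => r c < r k).card)
            + ∑ c ∈ T.filter (fun c => ¬ v' < r c), 2 ^ (J.filter fun k => r c < r k).card :=
        (Finset.sum_filter_add_sum_filter_not T _ _).symm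
      have hTT : T.filter (fun c => v' < r c) = J.filter (fun c => v' < r c) := by
        rw [hT, Finset.filter_filter]
        apply Finset.filter_congr
        intro x hx
        constructor
        · rintro ⟨_, h⟩; exact h
        · intro h; exact ⟨lt_trans hvc0 h, h⟩
      -- second part: all c have r c = v'
      have heq : ∀ c ∈ T.filter (fun c => ¬ v' < r c), r c = v' := by
        intro c hc
        have h1 := Finset.mem_filter.mp hc
        exact le_antisymm (not_lt.mp h1.2) (hc0min c h1.1)
      have hconst : ∀ c ∈ T.filter (fun c => ¬ v' < r c),
          2 ^ (J.filter fun k => r c < r k).card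
            = 2 ^ (J.filter fun k => v' < r k).card := by
        intro c hc
        rw [heq c hc]
      have hsum2 : ∑ c ∈ T.filter (fun c => ¬ v' < r c), 2 ^ (J.filter fun k => r c < r k).card
          = (T.filter (fun c => ¬ v' < r c)).card * 2 ^ (J.filter fun k => v' < r k).card := by
        rw [Finset.sum_congr rfl hconst, Finset.sum_const, smul_eq_mul]
      -- cards
      have hcards : (T.filter (fun c => v' < r c)).card + (T.filter (fun c => ¬ v' < r c)).card = n := by
        rw [← hcard]
        exact Finset.card_filter_add_card_filter_not _
      have hc0mem : c0 ∈ T.filter (fun c => ¬ v' < r c) := by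
        refine Finset.mem_filter.mpr ⟨hc0T, by simp [hv']⟩
      have hSpos : 1 ≤ (T.filter (fun c => ¬ v' < r c)).card :=
        Finset.card_pos.mpr ⟨c0, hc0mem⟩
      have hlt : (J.filter (fun c => v' < r c)).card < n := by
        have : (T.filter (fun c => v' < r c)).card < n := by omega
        rwa [hTT] at this
      have hih := ih _ hlt v' rfl
      -- combine
      set m := (J.filter fun k => v' < r k).card with hm
      set S := (T.filter (fun c => ¬ v' < r c)).card with hS
      have h1 : (∑ c ∈ T.filter (fun c => v' < r c), 2 ^ (J.filter fun k => r c < r k).card) < 2 ^ m := by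
        rw [hTT]; exact hih
      calc ∑ c ∈ T, 2 ^ (J.filter fun k => r c < r k).card
          = _ + _ := hsplit
        _ < 2 ^ m + S * 2 ^ m := by rw [hsum2]; omega
        _ = (S + 1) * 2 ^ m := by ring
        _ ≤ 2 ^ S * 2 ^ m := by
            have := Nat.lt_two_pow_self (n := S)
            exact Nat.mul_le_mul_right _ (by omega)
        _ = 2 ^ (S + m) := by rw [pow_add]
        _ = 2 ^ n := by
            congr 1
            have : (T.filter (fun c => v' < r c)).card = m := by rw [hTT]
            omega

lemma row_bound (J : Finset ι) (r : ι → ℝ) (j0 : ι) :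
    (∑ j ∈ J, if r j0 < r j then Wt J r j else 0) < Wt J r j0 := by
  rw [← Finset.sum_filter]
  unfold Wt
  exact sum_two_pow_lt' J r _ (r j0) rfl

lemma ite_le_ite {P Q : Prop} [Decidable P] [Decidable Q] (w : ℕ) (h : P → Q) :
    (if P then w else 0) ≤ (if Q then w else 0) := by
  by_cases hP : P
  · rw [if_pos hP, if_pos (h hP)]
  · simp [hP]

lemma phase1 (J : Finset ι) (r d p : ι → ℝ)
    (hagree : ∀ i ∈ J, ∀ j ∈ J, r i ≤ r j ↔ d i ≤ d j) :
    ∀ (N : ℕ) (s : ι → ℝ), Nval J r s ≤ N →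
      (∀ j ∈ J, r j ≤ s j ∧ s j + p j ≤ d j) →
      ∃ t : ι → ℝ, (∀ j ∈ J, r j ≤ t j ∧ t j + p j ≤ d j) ∧
        (∀ i ∈ J, ∀ j ∈ J, r i < r j → t i ≤ t j) ∧
        (⋃ j ∈ J, Set.Ico (t j) (t j + p j)) ⊆ ⋃ j ∈ J, Set.Ico (s j) (s j + p j) := by
  classical
  intro N
  induction N with
  | zero =>
    intro s hN hfeas
    refine ⟨s, hfeas, ?_, subset_rfl⟩
    intro i hi j hj hr
    by_contra hlt
    push_neg at hlt
    have hterm : Wt J r j ≤ Nval J r s := by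
      have h1 : Wt J r j ≤ ∑ j' ∈ J, if r i < r j' ∧ s j' < s i then Wt J r j' else 0 := by
        have h := Finset.single_le_sum (f := fun j' => if r i < r j' ∧ s j' < s i then Wt J r j' else 0)
          (fun k _ => Nat.zero_le _) hj
        rwa [if_pos ⟨hr, hlt⟩] at h
      refine h1.trans ?_
      exact Finset.single_le_sum (f := fun i' => ∑ j' ∈ J, if r i' < r j' ∧ s j' < s i' then Wt J r j' else 0)
        (fun k _ => Nat.zero_le _) hi
    have hW : 1 ≤ Wt J r j := by unfold Wt; exact Nat.one_le_two_pow
    omega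
  | succ N ihN =>
    intro s hN hfeas
    by_cases hord : ∀ i ∈ J, ∀ j ∈ J, r i < r j → s i ≤ s j
    · exact ⟨s, hfeas, hord, subset_rfl⟩
    push_neg at hord
    obtain ⟨i0, hi0, j0, hj0, hr0, hs0⟩ := hord
    set B := J.filter (fun j => ∃ i ∈ J, r i < r j ∧ s j < s i) with hB
    have hBne : B.Nonempty := ⟨j0, Finset.mem_filter.mpr ⟨hj0, i0, hi0, hr0, hs0⟩⟩
    obtain ⟨js, hjsB, hjsmin⟩ := B.exists_min_image s hBne
    have hjsJ : js ∈ J := (Finset.mem_filter.mp hjsB).1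
    set P := J.filter (fun i => r i < r js ∧ s js < s i) with hP
    have hPne : P.Nonempty := by
      obtain ⟨i, hi, hri, hsi⟩ := (Finset.mem_filter.mp hjsB).2
      exact ⟨i, Finset.mem_filter.mpr ⟨hi, hri, hsi⟩⟩
    obtain ⟨is, hisP, hismin⟩ := P.exists_min_image r hPne
    have hisJ : is ∈ J := (Finset.mem_filter.mp hisP).1
    have hris : r is < r js := (Finset.mem_filter.mp hisP).2.1
    have hsis : s js < s is := (Finset.mem_filter.mp hisP).2.2
    have hm1 : ∀ j ∈ J, (∃ i ∈ J, r i < r j ∧ s j < s i) → s js ≤ s j := by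
      intro j hj hex
      exact hjsmin j (Finset.mem_filter.mpr ⟨hj, hex⟩)
    have hm2 : ∀ i ∈ J, r i < r js → s js < s i → r is ≤ r i := by
      intro i hi h1 h2
      exact hismin i (Finset.mem_filter.mpr ⟨hi, h1, h2⟩)
    have hne : is ≠ js := fun h => absurd hris (by rw [h]; exact lt_irrefl _)
    -- helper for union step
    have hUsub : ∀ (a b : ι) (u : ι → ℝ), a ∈ J → b ∈ J →
        Set.Ico (u b) (u b + p a) ⊆ Set.Ico (u b) (u b + p b) →
        (⋃ j ∈ J, Set.Ico (Function.update u a (u b) j) (Function.update u a (u b) j + p j))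
          ⊆ ⋃ j ∈ J, Set.Ico (u j) (u j + p j) := by
      intro a b u ha hb hsub x hx
      simp only [Set.mem_iUnion, exists_prop] at hx ⊢
      obtain ⟨j, hj, hxj⟩ := hx
      by_cases hja : j = a
      · subst hja
        rw [Function.update_self] at hxj
        exact ⟨b, hb, hsub hxj⟩
      · rw [Function.update_of_ne hja] at hxj
        exact ⟨j, hj, hxj⟩
    by_cases hpcase : p is ≤ p js
    · -- LEFT MOVE: is moves to s js
      set s' := Function.update s is (s js) with hs'
      have hfeas' : ∀ j ∈ J, r j ≤ s' j ∧ s' j + p j ≤ d j := by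
        intro j hj
        by_cases hjis : j = is
        · have hupd : s' j = s js := by rw [hs', hjis, Function.update_self]
          constructor
          · rw [hupd, hjis]
            have h1 := (hfeas js hjsJ).1
            linarith [hris]
          · rw [hupd, hjis]
            have h2 := (hfeas is hisJ).2
            linarith [hsis]
        · rw [hs', Function.update_of_ne hjis]
          exact hfeas j hj
      -- condition implication
      have hC1 : ∀ i ∈ J, ∀ j ∈ J, (r i < r j ∧ s' j < s' i) → (r i < r j ∧ s j < s i) := by
        intro i hi j hj ⟨h1, h2⟩
        by_cases hjis : j = is
        · exfalso
          by_cases hiis : i = is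
          · rw [hjis, hiis] at h1; exact lt_irrefl _ h1
          · have e1 : s' j = s js := by rw [hjis, hs', Function.update_self]
            have e2 : s' i = s i := by rw [hs', Function.update_of_ne hiis]
            rw [e1, e2] at h2
            rw [hjis] at h1
            have : r is ≤ r i := hm2 i hi (lt_trans h1 hris) h2
            exact absurd h1 (not_lt.mpr this)
        · have e1 : s' j = s j := by rw [hs', Function.update_of_ne hjis]
          rw [e1] at h2
          by_cases hiis : i = is
          · have e2 : s' i = s js := by rw [hiis, hs', Function.update_self]
            rw [e2] at h2
            refine ⟨h1, ?_⟩
            have : s i = s is := by rw [hiis]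
            rw [this]
            exact lt_trans h2 hsis
          · have e2 : s' i = s i := by rw [hs', Function.update_of_ne hiis]
            rw [e2] at h2
            exact ⟨h1, h2⟩
      have hNlt : Nval J r s' < Nval J r s := by
        apply Finset.sum_lt_sum
        · intro i hi
          apply Finset.sum_le_sum
          intro j hj
          exact ite_le_ite _ (hC1 i hi j hj)
        · refine ⟨is, hisJ, ?_⟩
          apply Finset.sum_lt_sum
          · intro j hj
            exact ite_le_ite _ (hC1 is hisJ j hj)
          · refine ⟨js, hjsJ, ?_⟩
            have hold : (if r is < r js ∧ s js < s is then Wt J r js else 0) = Wt J r js :=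
              if_pos ⟨hris, hsis⟩
            have hnew : (if r is < r js ∧ s' js < s' is then Wt J r js else 0) = 0 := by
              rw [if_neg]
              rintro ⟨-, h2⟩
              have e1 : s' js = s js := Function.update_of_ne (Ne.symm hne) _ _
              have e2 : s' is = s js := Function.update_self _ _ _
              rw [e1, e2] at h2
              exact lt_irrefl _ h2
            rw [hold, hnew]
            unfold Wt
            positivity
      obtain ⟨t, ht1, ht2, ht3⟩ := ihN s' (by omega) hfeas'
      refine ⟨t, ht1, ht2, ht3.trans ?_⟩
      apply hUsub is js s hisJ hjsJ
      intro x hx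
      exact ⟨hx.1, lt_of_lt_of_le hx.2 (by linarith)⟩
    · -- RIGHT MOVE: js moves to s is
      push_neg at hpcase
      set s' := Function.update s js (s is) with hs'
      have hdisjs : d is ≤ d js := (hagree is hisJ js hjsJ).1 (le_of_lt hris)
      have hfeas' : ∀ j ∈ J, r j ≤ s' j ∧ s' j + p j ≤ d j := by
        intro j hj
        by_cases hjjs : j = js
        · have hupd : s' j = s is := by rw [hs', hjjs, Function.update_self]
          constructor
          · rw [hupd, hjjs]
            have h1 := (hfeas js hjsJ).1
            linarith [hsis]
          · rw [hupd, hjjs]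
            have h2 := (hfeas is hisJ).2
            linarith [hdisjs, hpcase]
        · rw [hs', Function.update_of_ne hjjs]
          exact hfeas j hj
      -- row notation
      set row : (ι → ℝ) → ι → ℕ :=
        fun u i => ∑ j ∈ J, if r i < r j ∧ u j < u i then Wt J r j else 0 with hrow
      have hNval : ∀ u, Nval J r u = ∑ i ∈ J, row u i := fun u => rfl
      -- row js s = 0
      have hrowjs : row s js = 0 := by
        apply Finset.sum_eq_zero
        intro j hj
        rw [if_neg]
        rintro ⟨h1, h2⟩
        have := hm1 j hj ⟨js, hjsJ, h1, h2⟩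
        exact absurd h2 (not_lt.mpr this)
      -- row js s' < Wt js
      have hrowjs' : row s' js < Wt J r js := by
        refine lt_of_le_of_lt ?_ (row_bound J r js)
        apply Finset.sum_le_sum
        intro j hj
        exact ite_le_ite _ (fun h => h.1)
      -- rows i ≠ js pointwise
      have hrowle : ∀ i ∈ J, i ≠ js → row s' i ≤ row s i := by
        intro i hi hijs
        apply Finset.sum_le_sum
        intro j hj
        apply ite_le_ite
        rintro ⟨h1, h2⟩
        refine ⟨h1, ?_⟩
        have e2 : s' i = s i := by rw [hs', Function.update_of_ne hijs]
        rw [e2] at h2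
        by_cases hjjs : j = js
        · have e1 : s' j = s is := by rw [hjjs, hs', Function.update_self]
          rw [e1] at h2
          rw [hjjs]
          exact lt_trans hsis h2
        · have e1 : s' j = s j := by rw [hs', Function.update_of_ne hjjs]
          rw [e1] at h2
          exact h2
      -- row is quantitative
      have hrowis : row s' is + Wt J r js ≤ row s is := by
        have e1 : row s is = (∑ j ∈ J.erase js, if r is < r j ∧ s j < s is then Wt J r j else 0)
            + Wt J r js := by
          rw [hrow]
          dsimp only
          rw [← Finset.sum_erase_add J _ hjsJ, if_pos ⟨hris, hsis⟩]
        have e2 : row s' is = (∑ j ∈ J.erase js, if r is < r j ∧ s' j < s' is then Wt J r j else 0) := by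
          rw [hrow]
          dsimp only
          rw [← Finset.sum_erase_add J _ hjsJ, if_neg, add_zero]
          rintro ⟨-, h2⟩
          have e1 : s' js = s is := Function.update_self _ _ _
          have e2 : s' is = s is := Function.update_of_ne hne _ _
          rw [e1, e2] at h2
          exact lt_irrefl _ h2
        have e3 : (∑ j ∈ J.erase js, if r is < r j ∧ s' j < s' is then Wt J r j else 0)
            ≤ ∑ j ∈ J.erase js, if r is < r j ∧ s j < s is then Wt J r j else 0 := by
          apply Finset.sum_le_sum
          intro j hj
          have hjne : j ≠ js := Finset.ne_of_mem_erase hj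
          apply ite_le_ite
          rintro ⟨h1, h2⟩
          have e1 : s' j = s j := Function.update_of_ne hjne _ _
          have e2 : s' is = s is := Function.update_of_ne hne _ _
          rw [e1, e2] at h2
          exact ⟨h1, h2⟩
        omega
      -- assemble
      have hNlt : Nval J r s' < Nval J r s := by
        have hisE : is ∈ J.erase js := Finset.mem_erase.mpr ⟨hne, hisJ⟩
        have d1 : ∀ u, Nval J r u = (∑ i ∈ (J.erase js).erase is, row u i) + row u is + row u js := by
          intro u
          rw [hNval, ← Finset.sum_erase_add J _ hjsJ, ← Finset.sum_erase_add (J.erase js) _ hisE]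
        have hE : ∀ i ∈ (J.erase js).erase is, row s' i ≤ row s i := by
          intro i hi
          exact hrowle i (Finset.mem_of_mem_erase (Finset.mem_of_mem_erase hi))
            (Finset.ne_of_mem_erase (Finset.mem_of_mem_erase hi))
        have hEsum : (∑ i ∈ (J.erase js).erase is, row s' i) ≤ ∑ i ∈ (J.erase js).erase is, row s i :=
          Finset.sum_le_sum hE
        have hW : 1 ≤ Wt J r js := by unfold Wt; exact Nat.one_le_two_pow
        rw [d1 s', d1 s]
        omega
      obtain ⟨t, ht1, ht2, ht3⟩ := ihN s' (by omega) hfeas'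
      refine ⟨t, ht1, ht2, ht3.trans ?_⟩
      apply hUsub js is s hjsJ hisJ
      intro x hx
      exact ⟨hx.1, lt_of_lt_of_le hx.2 (by linarith)⟩

lemma phase2 (J : Finset ι) (r d p : ι → ℝ)
    (hagree : ∀ i ∈ J, ∀ j ∈ J, r i ≤ r j ↔ d i ≤ d j)
    (t : ι → ℝ) (hfeas : ∀ j ∈ J, r j ≤ t j ∧ t j + p j ≤ d j)
    (hord : ∀ i ∈ J, ∀ j ∈ J, r i < r j → t i ≤ t j) :
    ∃ t' : ι → ℝ, (∀ j ∈ J, r j ≤ t' j ∧ t' j + p j ≤ d j) ∧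
      (∀ i ∈ J, ∀ j ∈ J, r i ≤ r j → t' i ≤ t' j) ∧
      (⋃ j ∈ J, Set.Ico (t' j) (t' j + p j)) ⊆ ⋃ j ∈ J, Set.Ico (t j) (t j + p j) := by
  classical
  rcases J.eq_empty_or_nonempty with hJ | ⟨j0, hj0⟩
  · refine ⟨t, hfeas, ?_, subset_rfl⟩
    intro i hi
    rw [hJ] at hi
    exact absurd hi (Finset.notMem_empty i)
  · set L : ℝ → ι := fun v =>
      if h : (J.filter fun k => r k = v).Nonempty then
        ((J.filter fun k => r k = v).exists_max_image p h).choose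
      else j0 with hLdef
    have hLspec : ∀ j ∈ J, L (r j) ∈ J ∧ r (L (r j)) = r j ∧ p j ≤ p (L (r j)) := by
      intro j hj
      have hne : (J.filter fun k => r k = r j).Nonempty := ⟨j, Finset.mem_filter.mpr ⟨hj, rfl⟩⟩
      have hLeq : L (r j) = ((J.filter fun k => r k = r j).exists_max_image p hne).choose := by
        rw [hLdef]
        dsimp only
        rw [dif_pos hne]
      obtain ⟨hmem, hmax⟩ := ((J.filter fun k => r k = r j).exists_max_image p hne).choose_spec
      have h1 := Finset.mem_filter.mp hmem
      rw [hLeq]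
      exact ⟨h1.1, h1.2, hmax j (Finset.mem_filter.mpr ⟨hj, rfl⟩)⟩
    refine ⟨fun j => t (L (r j)), ?_, ?_, ?_⟩
    · intro j hj
      obtain ⟨hLJ, hLr, hLp⟩ := hLspec j hj
      have hf1 := (hfeas _ hLJ).1
      have hf2 := (hfeas _ hLJ).2
      have hdd : d (L (r j)) ≤ d j := (hagree _ hLJ j hj).1 (le_of_eq hLr)
      constructor
      · rw [← hLr]; exact hf1
      · linarith
    · intro i hi j hj hij
      rcases eq_or_lt_of_le hij with heq | hlt
      · show t (L (r i)) ≤ t (L (r j))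
        rw [heq]
      · refine hord _ (hLspec i hi).1 _ (hLspec j hj).1 ?_
        rw [(hLspec i hi).2.1, (hLspec j hj).2.1]
        exact hlt
    · intro x hx
      simp only [Set.mem_iUnion, exists_prop] at hx ⊢
      obtain ⟨j, hj, hxj⟩ := hx
      obtain ⟨hLJ, hLr, hLp⟩ := hLspec j hj
      exact ⟨L (r j), hLJ, hxj.1, lt_of_lt_of_le hxj.2 (by linarith)⟩

lemma vol_diff (a b q : ℝ) :
    volume (Ico a (a + q) \ Ico b (b + q)) ≤ ENNReal.ofReal |a - b| := by
  have hsub : Ico a (a + q) \ Ico b (b + q) ⊆ Ico a b ∪ Ico (b + q) (a + q) := by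
    rintro x ⟨⟨h1, h2⟩, hx⟩
    rw [Set.mem_Ico, not_and_or] at hx
    rcases hx with h | h
    · exact Or.inl ⟨h1, not_le.mp h⟩
    · exact Or.inr ⟨not_lt.mp h, h2⟩
  refine le_trans (measure_mono hsub) (le_trans (measure_union_le _ _) ?_)
  rw [Real.volume_Ico, Real.volume_Ico]
  rcases le_total a b with h | h
  · have h2 : ENNReal.ofReal (a + q - (b + q)) = 0 := by
      rw [ENNReal.ofReal_eq_zero]; linarith
    rw [h2, add_zero]
    apply ENNReal.ofReal_le_ofReal
    rw [abs_sub_comm]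
    exact le_abs_self _
  · have h2 : ENNReal.ofReal (b - a) = 0 := by
      rw [ENNReal.ofReal_eq_zero]; linarith
    rw [h2, zero_add]
    apply ENNReal.ofReal_le_ofReal
    have : a + q - (b + q) = a - b := by ring
    rw [this]
    exact le_abs_self _

lemma span_ne_top (J : Finset ι) (p : ι → ℝ) (s : ι → ℝ) :
    volume (⋃ j ∈ J, Ico (s j) (s j + p j)) ≠ ⊤ := by
  refine ne_top_of_le_ne_top ?_ (measure_biUnion_finset_le J _)
  simp only [Real.volume_Ico]
  refine (ENNReal.sum_lt_top.mpr ?_).ne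
  intro a ha
  exact ENNReal.ofReal_lt_top

lemma span_le (J : Finset ι) (p : ι → ℝ) (s t : ι → ℝ) :
    volume (⋃ j ∈ J, Ico (s j) (s j + p j)) ≤
      volume (⋃ j ∈ J, Ico (t j) (t j + p j)) + ∑ j ∈ J, ENNReal.ofReal |s j - t j| := by
  have hsub : (⋃ j ∈ J, Ico (s j) (s j + p j)) ⊆
      (⋃ j ∈ J, Ico (t j) (t j + p j)) ∪
        ⋃ j ∈ J, (Ico (s j) (s j + p j) \ Ico (t j) (t j + p j)) := by
    intro x hx
    simp only [Set.mem_iUnion, Set.mem_union, exists_prop] at hx ⊢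
    obtain ⟨j, hj, hxj⟩ := hx
    by_cases hxt : x ∈ Ico (t j) (t j + p j)
    · exact Or.inl ⟨j, hj, hxt⟩
    · exact Or.inr ⟨j, hj, hxj, hxt⟩
  refine le_trans (measure_mono hsub) (le_trans (measure_union_le _ _) ?_)
  refine add_le_add le_rfl (le_trans (measure_biUnion_finset_le _ _) ?_)
  exact Finset.sum_le_sum fun j _ => vol_diff (s j) (t j) (p j)

lemma g_est (J : Finset ι) (p : ι → ℝ) (s t : ι → ℝ) :
    (volume (⋃ j ∈ J, Ico (s j) (s j + p j))).toReal ≤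
      (volume (⋃ j ∈ J, Ico (t j) (t j + p j))).toReal + ∑ j ∈ J, |s j - t j| := by
  have h := span_le J p s t
  have hsum : (∑ j ∈ J, ENNReal.ofReal |s j - t j|) ≠ ⊤ := by
    refine (ENNReal.sum_lt_top.mpr ?_).ne
    intro a _
    exact ENNReal.ofReal_lt_top
  have h2 := ENNReal.toReal_mono (ENNReal.add_ne_top.mpr ⟨span_ne_top J p t, hsum⟩) h
  rw [ENNReal.toReal_add (span_ne_top J p t) hsum] at h2
  refine h2.trans (le_of_eq ?_)
  congr 1
  rw [ENNReal.toReal_sum (fun a _ => ENNReal.ofReal_ne_top)]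
  exact Finset.sum_congr rfl fun j _ => ENNReal.toReal_ofReal (abs_nonneg _)

lemma g_cont (J : Finset ι) (p : ι → ℝ) :
    Continuous (fun s : ι → ℝ => (volume (⋃ j ∈ J, Ico (s j) (s j + p j))).toReal) := by
  rw [continuous_iff_continuousAt]
  intro t
  have hD : Filter.Tendsto (fun s : ι → ℝ => ∑ j ∈ J, |s j - t j|) (nhds t) (nhds 0) := by
    have hc : Continuous (fun s : ι → ℝ => ∑ j ∈ J, |s j - t j|) := by
      apply continuous_finset_sum
      intro j _
      exact ((continuous_apply j).sub continuous_const).abs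
    have := hc.tendsto t
    simpa using this
  rw [ContinuousAt, Metric.tendsto_nhds]
  intro ε hε
  have hev : ∀ᶠ s in nhds t, (∑ j ∈ J, |s j - t j|) < ε := by
    have := Metric.tendsto_nhds.mp hD ε hε
    filter_upwards [this] with s hs
    rw [Real.dist_eq, sub_zero] at hs
    exact lt_of_le_of_lt (le_abs_self _) hs
  filter_upwards [hev] with s hs
  rw [Real.dist_eq]
  refine lt_of_le_of_lt ?_ hs
  rw [abs_sub_le_iff]
  constructor
  · linarith [g_est J p s t]
  · have := g_est J p t s
    have heq : (∑ j ∈ J, |t j - s j|) = ∑ j ∈ J, |s j - t j| :=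
      Finset.sum_congr rfl fun j _ => abs_sub_comm _ _
    linarith [this, heq.le]


end Stmt6Aux

/-- For flexible jobs with agreeable deadlines, there is a feasible single-machine
schedule minimizing the span in which jobs start in order of their release times. -/
theorem stmt_6 {ι : Type*} (J : Finset ι) (r d p : ι → ℝ)
    (hp : ∀ j ∈ J, 0 < p j) (hflex : ∀ j ∈ J, p j ≤ d j - r j)
    (hagree : ∀ i ∈ J, ∀ j ∈ J, r i ≤ r j ↔ d i ≤ d j) :
    ∃ s : ι → ℝ,
      (∀ j ∈ J, r j ≤ s j ∧ s j + p j ≤ d j) ∧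
      (∀ s' : ι → ℝ, (∀ j ∈ J, r j ≤ s' j ∧ s' j + p j ≤ d j) →
        volume (⋃ j ∈ J, Set.Ico (s j) (s j + p j)) ≤
          volume (⋃ j ∈ J, Set.Ico (s' j) (s' j + p j))) ∧
      (∀ i ∈ J, ∀ j ∈ J, r i ≤ r j → s i ≤ s j) := by
  classical
  set K : Set (ι → ℝ) :=
    Set.pi Set.univ (fun j => if j ∈ J then Set.Icc (r j) (d j - p j) else {0}) with hK
  have hKcomp : IsCompact K := by
    apply isCompact_univ_pi
    intro j
    split
    · exact isCompact_Icc
    · exact isCompact_singleton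
  set C : Set (ι → ℝ) := {s | ∀ i ∈ J, ∀ j ∈ J, r i ≤ r j → s i ≤ s j} with hC
  have hCclosed : IsClosed C := by
    have hCeq : C = ⋂ i ∈ J, ⋂ j ∈ J, {s : ι → ℝ | r i ≤ r j → s i ≤ s j} := by
      ext s
      simp only [hC, Set.mem_setOf_eq, Set.mem_iInter]
    rw [hCeq]
    refine isClosed_biInter fun i _ => isClosed_biInter fun j _ => ?_
    by_cases h : r i ≤ r j
    · have he : {s : ι → ℝ | r i ≤ r j → s i ≤ s j} = {s | s i ≤ s j} := by
        ext s; simp [h]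
      rw [he]
      exact isClosed_le (continuous_apply i) (continuous_apply j)
    · have he : {s : ι → ℝ | r i ≤ r j → s i ≤ s j} = Set.univ := by
        ext s; simp [h]
      rw [he]
      exact isClosed_univ
  have hKC : IsCompact (K ∩ C) := hKcomp.inter_right hCclosed
  have hne : (K ∩ C).Nonempty := by
    refine ⟨fun j => if j ∈ J then r j else 0, ?_, ?_⟩
    · rw [hK, Set.mem_univ_pi]
      intro j
      by_cases h : j ∈ J
      · simp only [if_pos h]
        exact ⟨le_refl _, by linarith [hflex j h]⟩
      · simp only [if_neg h]
        rfl
    · intro i hi j hj hij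
      simp only [if_pos hi, if_pos hj]
      exact hij
  obtain ⟨sstar, hsstarmem, hmin⟩ := hKC.exists_isMinOn hne
    ((g_cont J p).continuousOn)
  obtain ⟨hsK, hsC⟩ := hsstarmem
  have hfeasstar : ∀ j ∈ J, r j ≤ sstar j ∧ sstar j + p j ≤ d j := by
    intro j hj
    have hmem := hsK j (Set.mem_univ j)
    simp only [if_pos hj] at hmem
    exact ⟨hmem.1, by linarith [hmem.2]⟩
  refine ⟨sstar, hfeasstar, ?_, hsC⟩
  intro s' hs'
  obtain ⟨t1, ht1f, ht1o, ht1u⟩ := phase1 J r d p hagree (Nval J r s') s' le_rfl hs'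
  obtain ⟨t2, ht2f, ht2o, ht2u⟩ := phase2 J r d p hagree t1 ht1f ht1o
  set t3 : ι → ℝ := fun j => if j ∈ J then t2 j else 0 with ht3
  have ht3mem : t3 ∈ K ∩ C := by
    constructor
    · rw [hK, Set.mem_univ_pi]
      intro j
      by_cases h : j ∈ J
      · simp only [ht3, if_pos h]
        exact ⟨(ht2f j h).1, by linarith [(ht2f j h).2]⟩
      · simp only [ht3, if_neg h]
        rfl
    · intro i hi j hj hij
      simp only [ht3, if_pos hi, if_pos hj]
      exact ht2o i hi j hj hij
  have hgle := isMinOn_iff.mp hmin t3 ht3mem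
  have hF : volume (⋃ j ∈ J, Set.Ico (sstar j) (sstar j + p j)) ≤
      volume (⋃ j ∈ J, Set.Ico (t3 j) (t3 j + p j)) :=
    (ENNReal.toReal_le_toReal (span_ne_top J p sstar) (span_ne_top J p t3)).mp hgle
  have ht3eq : (⋃ j ∈ J, Set.Ico (t3 j) (t3 j + p j)) =
      ⋃ j ∈ J, Set.Ico (t2 j) (t2 j + p j) := by
    apply Set.iUnion_congr
    intro j
    apply Set.iUnion_congr
    intro hj
    simp only [ht3, if_pos hj]
  calc volume (⋃ j ∈ J, Set.Ico (sstar j) (sstar j + p j))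
      ≤ volume (⋃ j ∈ J, Set.Ico (t3 j) (t3 j + p j)) := hF
    _ = volume (⋃ j ∈ J, Set.Ico (t2 j) (t2 j + p j)) := by rw [ht3eq]
    _ ≤ volume (⋃ j ∈ J, Set.Ico (t1 j) (t1 j + p j)) := measure_mono ht2u
    _ ≤ volume (⋃ j ∈ J, Set.Ico (s' j) (s' j + p j)) := measure_mono ht1u
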